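/- arXiv:2202.02816 — 3 statements merged into one kernel-verified Lean document; each statement's English description precedes it below -/
import Mathlib

section
/- Let P ≤ Sym({1,...,k}) be a permutation group with k even, and let X be the set of subsets Λ ⊆ {1,...,k} with |Λ| ≠ k/2. If |P| < 2^(μ(P)/2 - 1), where μ(P) is the minimal degree of P (the minimal number of points moved by a non-identity element of P), then P has a regular orbit on X, i.e. there exists Λ ∈ X whose setwise stabiliser in P is trivial. -/
open Finset Equiv

/-- The number of points of `Fin k` moved by the permutation `σ`. -/
noncomputable def movedCard {k : ℕ} (σ : Equiv.Perm (Fin k)) : ℕ :=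
  (Finset.univ.filter fun i => σ i ≠ i).card

/-- The minimal degree `μ(P)` of a permutation group `P ≤ Sym(Fin k)`: the minimal number
of points moved by a non-identity element of `P`. -/
noncomputable def minDeg {k : ℕ} (P : Subgroup (Equiv.Perm (Fin k))) : ℕ :=
  sInf {n | ∃ σ ∈ P, σ ≠ 1 ∧ movedCard σ = n}

section aux
variable {k : ℕ}

/-- invariance under σ gives iff membership -/
lemma mem_inv_iff {σ : Equiv.Perm (Fin k)} {Λ : Finset (Fin k)} (h : Λ.image σ = Λ) (x : Fin k) :
    σ x ∈ Λ ↔ x ∈ Λ := by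
  constructor
  · intro hx
    rw [← h] at hx
    obtain ⟨y, hy, hxy⟩ := Finset.mem_image.1 hx
    rwa [← σ.injective hxy]
  · intro hx
    rw [← h]
    exact Finset.mem_image_of_mem _ hx

lemma mem_inv_zpow {σ : Equiv.Perm (Fin k)} {Λ : Finset (Fin k)} (h : Λ.image σ = Λ)
    (n : ℤ) (x : Fin k) : (σ ^ n) x ∈ Λ ↔ x ∈ Λ := by
  have key : ∀ (m : ℤ) (y : Fin k), (σ ^ (m + 1)) y = σ ((σ ^ m) y) := by
    intro m y
    rw [add_comm, zpow_one_add, Equiv.Perm.mul_apply]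
  induction n using Int.induction_on with
  | zero => simp
  | succ n ih => rw [key, mem_inv_iff h]; exact ih
  | pred n ih =>
      have e : (σ ^ (-(n:ℤ))) x = σ ((σ ^ (-(n:ℤ) - 1)) x) := by
        have h4 := key (-(n:ℤ) - 1) x
        rw [show (-(n:ℤ) - 1) + 1 = -(n:ℤ) by ring] at h4
        exact h4
      rw [e, mem_inv_iff h] at ih
      exact ih

lemma mem_inv_sameCycle {σ : Equiv.Perm (Fin k)} {Λ : Finset (Fin k)} (h : Λ.image σ = Λ)
    {x y : Fin k} (hxy : σ.SameCycle x y) (hx : x ∈ Λ) : y ∈ Λ := by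
  obtain ⟨n, hn⟩ := hxy
  rw [← hn]
  exact (mem_inv_zpow h n x).2 hx

end aux

lemma card_fixed_le {k : ℕ} (σ : Equiv.Perm (Fin k)) :
    (Finset.univ.filter fun Λ : Finset (Fin k) => Λ.image σ = Λ).card
      ≤ 2 ^ (k - (movedCard σ + 1) / 2) := by
  classical
  set M : Finset (Fin k) := Finset.univ.filter (fun i => σ i ≠ i) with hM
  have hMmem : ∀ x, x ∈ M ↔ σ x ≠ x := by intro x; simp [hM]
  set f : Fin k → Fin k := fun x =>
    if h : (M.filter (fun y => σ.SameCycle x y)).Nonempty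
    then (M.filter (fun y => σ.SameCycle x y)).min' h else x with hf
  have hfx : ∀ x ∈ M, f x ∈ M ∧ σ.SameCycle x (f x) := by
    intro x hx
    have hne : (M.filter (fun y => σ.SameCycle x y)).Nonempty :=
      ⟨x, Finset.mem_filter.2 ⟨hx, Equiv.Perm.SameCycle.refl σ x⟩⟩
    have := Finset.min'_mem _ hne
    rw [Finset.mem_filter] at this
    simp only [hf, dif_pos hne]
    exact this
  have hff : ∀ x ∈ M, ∀ y, σ.SameCycle x y → f x = f y := by
    intro x hx y hxy
    have hy : y ∈ M := by
      rw [hMmem] at hx ⊢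
      intro hyfix
      have hyx : σ.SameCycle y x := hxy.symm
      obtain ⟨m, hm⟩ := hyx
      rw [Equiv.Perm.zpow_apply_eq_self_of_apply_eq_self hyfix m] at hm
      exact hx (by rw [← hm, hyfix])
    have hset : M.filter (fun z => σ.SameCycle x z) = M.filter (fun z => σ.SameCycle y z) := by
      ext z
      simp only [Finset.mem_filter, and_congr_right_iff]
      intro _
      exact ⟨fun hz => hxy.symm.trans hz, fun hz => hxy.trans hz⟩
    have hne2 : (M.filter (fun z => σ.SameCycle y z)).Nonempty :=
      ⟨y, Finset.mem_filter.2 ⟨hy, Equiv.Perm.SameCycle.refl σ y⟩⟩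
    simp only [hf, hset, dif_pos hne2]
  set T : Finset (Fin k) := M.image f with hT
  have hTsub : T ⊆ M := by
    intro t ht
    obtain ⟨x, hx, rfl⟩ := Finset.mem_image.1 ht
    exact (hfx x hx).1
  have hTcard : 2 * T.card ≤ M.card := by
    have hmaps : ∀ x ∈ M, f x ∈ T := fun x hx => Finset.mem_image_of_mem f hx
    rw [Finset.card_eq_sum_card_fiberwise hmaps]
    have : ∀ t ∈ T, 2 ≤ (M.filter (fun y => f y = t)).card := by
      intro t ht
      obtain ⟨x, hx, rfl⟩ := Finset.mem_image.1 ht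
      have hσx : σ x ∈ M := by
        rw [hMmem] at hx ⊢
        exact fun e => hx (σ.injective e)
      have hfσx : f (σ x) = f x := (hff x hx (σ x) ⟨1, by simp⟩).symm
      have hsub : {x, σ x} ⊆ M.filter (fun y => f y = f x) := by
        intro z hz
        rcases Finset.mem_insert.1 hz with rfl | hz
        · exact Finset.mem_filter.2 ⟨hx, rfl⟩
        · rw [Finset.mem_singleton] at hz
          subst hz
          exact Finset.mem_filter.2 ⟨hσx, hfσx⟩
      have h2 : ({x, σ x} : Finset (Fin k)).card = 2 :=
        Finset.card_pair (fun e => (hMmem x).1 hx e.symm)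
      calc 2 = ({x, σ x} : Finset (Fin k)).card := h2.symm
        _ ≤ _ := Finset.card_le_card hsub
    calc 2 * T.card = ∑ _t ∈ T, 2 := by rw [Finset.sum_const, smul_eq_mul, mul_comm]
      _ ≤ ∑ t ∈ T, (M.filter (fun y => f y = t)).card := Finset.sum_le_sum this
  set D : Finset (Fin k) := M \ T with hD
  have hDcard : (movedCard σ + 1) / 2 ≤ D.card := by
    have : D.card = M.card - T.card := Finset.card_sdiff_of_subset hTsub
    have hm : movedCard σ = M.card := rfl
    omega
  -- injection
  have hinj : ∀ Λ₁ ∈ (Finset.univ.filter fun Λ : Finset (Fin k) => Λ.image σ = Λ),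
      ∀ Λ₂ ∈ (Finset.univ.filter fun Λ : Finset (Fin k) => Λ.image σ = Λ),
      Λ₁ \ D = Λ₂ \ D → Λ₁ = Λ₂ := by
    intro Λ₁ h1 Λ₂ h2 he
    rw [Finset.mem_filter] at h1 h2
    have main : ∀ (A B : Finset (Fin k)), A.image σ = A → B.image σ = B →
        A \ D = B \ D → ∀ x ∈ A, x ∈ B := by
      intro A B hA hB hAB x hx
      by_cases hxD : x ∈ D
      · have hxM : x ∈ M := (Finset.mem_sdiff.1 hxD).1
        obtain ⟨hfM, hcyc⟩ := hfx x hxM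
        have hfT : f x ∈ T := Finset.mem_image_of_mem f hxM
        have hfA : f x ∈ A := mem_inv_sameCycle hA hcyc hx
        have hfnD : f x ∉ D := fun hd => (Finset.mem_sdiff.1 hd).2 hfT
        have : f x ∈ B \ D := by rw [← hAB]; exact Finset.mem_sdiff.2 ⟨hfA, hfnD⟩
        exact mem_inv_sameCycle hB hcyc.symm (Finset.mem_sdiff.1 this).1
      · have : x ∈ B \ D := by rw [← hAB]; exact Finset.mem_sdiff.2 ⟨hx, hxD⟩
        exact (Finset.mem_sdiff.1 this).1
    ext x
    exact ⟨main Λ₁ Λ₂ h1.2 h2.2 he x, main Λ₂ Λ₁ h2.2 h1.2 he.symm x⟩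
  have hmaps : ∀ Λ ∈ (Finset.univ.filter fun Λ : Finset (Fin k) => Λ.image σ = Λ),
      Λ \ D ∈ (Finset.univ \ D).powerset := by
    intro Λ _
    rw [Finset.mem_powerset]
    intro x hx
    rw [Finset.mem_sdiff] at hx ⊢
    exact ⟨Finset.mem_univ x, hx.2⟩
  have hcard := Finset.card_le_card_of_injOn (fun Λ => Λ \ D) hmaps
    (fun a ha b hb he => hinj a (Finset.mem_coe.1 ha) b (Finset.mem_coe.1 hb) he)
  refine hcard.trans ?_
  rw [Finset.card_powerset, Finset.card_sdiff_of_subset (Finset.subset_univ D), Finset.card_univ,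
    Fintype.card_fin]
  exact Nat.pow_le_pow_right (by norm_num) (Nat.sub_le_sub_left hDcard k)


lemma good_card_ge {k : ℕ} (hk : 1 ≤ k) :
    2 ^ (k - 1) ≤ (Finset.univ.filter fun Λ : Finset (Fin k) => 2 * Λ.card ≠ k).card := by
  classical
  set Mid : Finset (Finset (Fin k)) := Finset.univ.filter (fun Λ : Finset (Fin k) => ¬ (2 * Λ.card ≠ k)) with hMid
  set Good : Finset (Finset (Fin k)) := Finset.univ.filter (fun Λ : Finset (Fin k) => 2 * Λ.card ≠ k) with hGood
  have htotal : Good.card + Mid.card = 2 ^ k := by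
    rw [hGood, hMid, Finset.card_filter_add_card_filter_not]
    rw [Finset.card_univ, Fintype.card_finset, Fintype.card_fin]
  set z : Fin k := ⟨0, hk⟩ with hz
  set ι : Finset (Fin k) → Finset (Fin k) := fun Λ => if z ∈ Λ then Λ.erase z else insert z Λ with hι
  have hmapsto : ∀ Λ ∈ Mid, ι Λ ∈ Good := by
    intro Λ hΛ
    rw [hMid, Finset.mem_filter, not_not] at hΛ
    rw [hGood, Finset.mem_filter]
    refine ⟨Finset.mem_univ _, ?_⟩
    by_cases hzΛ : z ∈ Λ
    · have hc : Λ.card ≥ 1 := Finset.card_pos.2 ⟨z, hzΛ⟩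
      rw [hι]
      simp only [if_pos hzΛ, Finset.card_erase_of_mem hzΛ]
      omega
    · rw [hι]
      simp only [if_neg hzΛ, Finset.card_insert_of_notMem hzΛ]
      omega
  have hinj : ∀ Λ₁ ∈ Mid, ∀ Λ₂ ∈ Mid, ι Λ₁ = ι Λ₂ → Λ₁ = Λ₂ := by
    intro Λ₁ _ Λ₂ _ he
    rw [hι] at he
    by_cases h1 : z ∈ Λ₁ <;> by_cases h2 : z ∈ Λ₂ <;>
      simp only [if_pos, if_neg, h1, h2, if_true, if_false] at he
    · rw [← Finset.insert_erase h1, ← Finset.insert_erase h2, he]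
    · exfalso
      have : z ∈ insert z Λ₂ := Finset.mem_insert_self z Λ₂
      rw [← he] at this
      exact (Finset.notMem_erase z Λ₁) this
    · exfalso
      have : z ∈ insert z Λ₁ := Finset.mem_insert_self z Λ₁
      rw [he] at this
      exact (Finset.notMem_erase z Λ₂) this
    · have := congrArg (fun s => Finset.erase s z) he
      simpa [Finset.erase_insert h1, Finset.erase_insert h2] using this
  have hle : Mid.card ≤ Good.card :=
    Finset.card_le_card_of_injOn ι hmapsto
      (fun a ha b hb he => hinj a (Finset.mem_coe.1 ha) b (Finset.mem_coe.1 hb) he)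
  have h2k : 2 ^ k = 2 * 2 ^ (k - 1) := by
    rw [← pow_succ']
    congr 1
    omega
  omega


/-- If `k` is even and `|P| < 2^(μ(P)/2 - 1)`, then `P` has a regular orbit on the set `X`
of subsets of `{1,...,k}` of size different from `k/2`, i.e. there is a subset `Λ` with
`|Λ| ≠ k/2` whose setwise stabiliser in `P` is trivial. -/
theorem stmt1 {k : ℕ} (hk : Even k) (P : Subgroup (Equiv.Perm (Fin k)))
    (h : (Nat.card P : ℝ) < 2 ^ ((minDeg P : ℝ) / 2 - 1)) :
    ∃ Λ : Finset (Fin k), 2 * Λ.card ≠ k ∧ ∀ σ ∈ P, Λ.image ⇑σ = Λ → σ = 1 := by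
  classical
  by_contra hcon
  push_neg at hcon
  have hP1 : 1 ≤ Nat.card P := Nat.one_le_iff_ne_zero.2 Nat.card_pos.ne'
  set S : Set ℕ := {n | ∃ σ ∈ P, σ ≠ 1 ∧ movedCard σ = n} with hS
  by_cases hSne : S.Nonempty
  · -- main case
    set μ := minDeg P with hμ
    obtain ⟨σ0, hσ0P, hσ0ne, hσ0m⟩ := Nat.sInf_mem hSne
    -- μ ≥ 2
    have hmoved2 : ∀ σ : Equiv.Perm (Fin k), σ ≠ 1 → 2 ≤ movedCard σ := by
      intro σ hne
      obtain ⟨x, hx⟩ : ∃ x, σ x ≠ x := by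
        by_contra hall
        push_neg at hall
        exact hne (Equiv.ext hall)
      have hx2 : σ (σ x) ≠ σ x := fun e => hx (σ.injective e)
      have hsub : ({x, σ x} : Finset (Fin k)) ⊆ Finset.univ.filter (fun i => σ i ≠ i) := by
        intro z hz
        rcases Finset.mem_insert.1 hz with rfl | hz
        · exact Finset.mem_filter.2 ⟨Finset.mem_univ _, hx⟩
        · rw [Finset.mem_singleton] at hz
          subst hz
          exact Finset.mem_filter.2 ⟨Finset.mem_univ _, hx2⟩
      calc 2 = ({x, σ x} : Finset (Fin k)).card := (Finset.card_pair (Ne.symm hx)).symm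
        _ ≤ _ := Finset.card_le_card hsub
      done
    have hmd : μ = sInf S := rfl
    have hμ2 : 2 ≤ μ := by
      rw [hmd, ← hσ0m]
      exact hmoved2 σ0 hσ0ne
    have hμk : μ ≤ k := by
      rw [hmd, ← hσ0m, movedCard]
      calc (Finset.univ.filter fun i => σ0 i ≠ i).card ≤ Finset.univ.card :=
            Finset.card_filter_le _ _
        _ = k := by rw [Finset.card_univ, Fintype.card_fin]
    set c : ℕ := (μ + 1) / 2 with hc
    have hc1 : 1 ≤ c := by omega
    have hck : c ≤ k := by omega
    -- card P < 2^(c-1) in ℕ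
    have hcardP : Nat.card P < 2 ^ (c - 1) := by
      have hle : ((minDeg P : ℝ) / 2 - 1) ≤ (((c - 1 : ℕ) : ℕ) : ℝ) := by
        have : ((c - 1 : ℕ) : ℝ) = (c : ℝ) - 1 := by
          push_cast [Nat.cast_sub hc1]
          ring
        rw [this]
        have hμc : (μ : ℝ) ≤ 2 * c := by
          have : μ ≤ 2 * c := by omega
          exact_mod_cast this
        rw [← hμ]
        linarith
      have h2 : (Nat.card P : ℝ) < 2 ^ (((c - 1 : ℕ) : ℕ) : ℝ) :=
        lt_of_lt_of_le h (Real.rpow_le_rpow_of_exponent_le (by norm_num) hle)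
      rw [Real.rpow_natCast] at h2
      exact_mod_cast h2
    set Q : Finset (Equiv.Perm (Fin k)) :=
      Finset.univ.filter (fun σ => σ ∈ P ∧ σ ≠ 1) with hQ
    have hQcard : Q.card < Nat.card P := by
      have hPcard : Nat.card P = (Finset.univ.filter (fun σ : Equiv.Perm (Fin k) => σ ∈ P)).card := by
        rw [Nat.card_eq_fintype_card]
        exact Fintype.card_subtype _
      rw [hPcard]
      apply Finset.card_lt_card
      constructor
      · intro σ hσ
        rw [hQ, Finset.mem_filter] at hσ
        exact Finset.mem_filter.2 ⟨Finset.mem_univ _, hσ.2.1⟩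
      · intro hsub
        have h1m := hsub (Finset.mem_filter.2 ⟨Finset.mem_univ _, P.one_mem⟩)
        rw [hQ, Finset.mem_filter] at h1m
        exact h1m.2.2 rfl
    -- Good set covered by fixed sets
    set Good : Finset (Finset (Fin k)) :=
      Finset.univ.filter (fun Λ : Finset (Fin k) => 2 * Λ.card ≠ k) with hGood
    have hcover : Good ⊆ Q.biUnion
        (fun σ => Finset.univ.filter fun Λ : Finset (Fin k) => Λ.image σ = Λ) := by
      intro Λ hΛ
      rw [hGood, Finset.mem_filter] at hΛ
      obtain ⟨σ, hσP, hσfix, hσne⟩ := hcon Λ hΛ.2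
      exact Finset.mem_biUnion.2 ⟨σ, Finset.mem_filter.2 ⟨Finset.mem_univ _, hσP, hσne⟩,
        Finset.mem_filter.2 ⟨Finset.mem_univ _, hσfix⟩⟩
    have hGoodle : Good.card ≤ Q.card * 2 ^ (k - c) := by
      calc Good.card ≤ _ := Finset.card_le_card hcover
        _ ≤ ∑ σ ∈ Q, (Finset.univ.filter fun Λ : Finset (Fin k) => Λ.image σ = Λ).card :=
            Finset.card_biUnion_le
        _ ≤ ∑ _σ ∈ Q, 2 ^ (k - c) := by
            apply Finset.sum_le_sum
            intro σ hσ
            rw [hQ, Finset.mem_filter] at hσ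
            have hm : μ ≤ movedCard σ := Nat.sInf_le ⟨σ, hσ.2.1, hσ.2.2, rfl⟩
            refine (card_fixed_le σ).trans ?_
            apply Nat.pow_le_pow_right (by norm_num)
            omega
        _ = Q.card * 2 ^ (k - c) := by rw [Finset.sum_const, smul_eq_mul]
    have hGoodge : 2 ^ (k - 1) ≤ Good.card := good_card_ge (by omega)
    -- final contradiction
    have hfin : 2 ^ (k - 1) + 2 ^ (k - c) ≤ 2 ^ (k - 1) := by
      calc 2 ^ (k - 1) + 2 ^ (k - c) ≤ Q.card * 2 ^ (k - c) + 2 ^ (k - c) := by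
            exact Nat.add_le_add_right (hGoodge.trans hGoodle) _
        _ = (Q.card + 1) * 2 ^ (k - c) := by ring
        _ ≤ 2 ^ (c - 1) * 2 ^ (k - c) := Nat.mul_le_mul_right _ (by omega)
        _ = 2 ^ (k - 1) := by rw [← pow_add]; congr 1; omega
    have : 1 ≤ 2 ^ (k - c) := Nat.one_le_two_pow
    omega
  · -- S empty : minDeg = 0, contradiction with h
    have hμ0 : minDeg P = 0 := by
      rw [minDeg, ← hS, Set.not_nonempty_iff_eq_empty.1 hSne]
      exact Nat.sInf_empty
    rw [hμ0] at h
    have : ((0 : ℕ) : ℝ) / 2 - 1 = (-1 : ℝ) := by norm_num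
    rw [this, Real.rpow_neg_one] at h
    have h1 : (1 : ℝ) ≤ (Nat.card P : ℝ) := by exact_mod_cast hP1
    have h2 : ((2 : ℝ))⁻¹ < 1 := by norm_num
    linarith
end

section
/- Suppose P ≤ Sym({1,...,k}) has distinguishing number D and the number t_D of unordered distinguishing partitions into D nonempty parts equals |P|/D!. Then every distinguishing partition of {1,...,k} into D parts has all parts of equal size; in particular D divides k. -/
/-- A (unordered) partition of `Fin k` into nonempty parts, given as a finset of parts. -/
def IsPart (k : ℕ) (B : Finset (Finset (Fin k))) : Prop :=
  (∀ p ∈ B, p.Nonempty) ∧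
  (∀ p ∈ B, ∀ q ∈ B, p ≠ q → Disjoint p q) ∧
  (∀ i : Fin k, ∃ p ∈ B, i ∈ p)

/-- A partition is distinguishing for `P` if the only element of `P` stabilising every part
setwise is the identity. -/
def IsDisting {k : ℕ} (P : Subgroup (Equiv.Perm (Fin k))) (B : Finset (Finset (Fin k))) : Prop :=
  ∀ σ ∈ P, (∀ p ∈ B, p.image ⇑σ = p) → σ = 1

/-- `tpart P m` is the number of unordered distinguishing partitions of `Fin k` for `P`
with `m` nonempty parts. -/
noncomputable def tpart {k : ℕ} (P : Subgroup (Equiv.Perm (Fin k))) (m : ℕ) : ℕ :=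
  Set.ncard {B : Finset (Finset (Fin k)) | IsPart k B ∧ IsDisting P B ∧ B.card = m}

/-- The distinguishing number `D(P)`: the minimal number of parts in a distinguishing
partition for `P`. -/
noncomputable def distNum {k : ℕ} (P : Subgroup (Equiv.Perm (Fin k))) : ℕ :=
  sInf {m | ∃ B : Finset (Finset (Fin k)), IsPart k B ∧ IsDisting P B ∧ B.card = m}

/- ---------- auxiliary material ---------- -/

lemma isPart_image {k : ℕ} (σ : Equiv.Perm (Fin k)) {B : Finset (Finset (Fin k))}
    (hB : IsPart k B) : IsPart k (B.image fun p => p.image ⇑σ) := by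
  obtain ⟨h1, h2, h3⟩ := hB
  refine ⟨?_, ?_, ?_⟩
  · intro p hp
    obtain ⟨q, hq, rfl⟩ := Finset.mem_image.mp hp
    exact (h1 q hq).image _
  · intro p hp q hq hne
    obtain ⟨p', hp', rfl⟩ := Finset.mem_image.mp hp
    obtain ⟨q', hq', rfl⟩ := Finset.mem_image.mp hq
    rw [Finset.disjoint_image σ.injective]
    exact h2 p' hp' q' hq' (fun hh => hne (by rw [hh]))
  · intro i
    obtain ⟨p, hp, hip⟩ := h3 (σ.symm i)
    exact ⟨p.image ⇑σ, Finset.mem_image_of_mem _ hp, by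
      simpa using Finset.mem_image_of_mem ⇑σ hip⟩

lemma isDisting_image {k : ℕ} (P : Subgroup (Equiv.Perm (Fin k))) {σ : Equiv.Perm (Fin k)}
    (hσ : σ ∈ P) {B : Finset (Finset (Fin k))} (hB : IsDisting P B) :
    IsDisting P (B.image fun p => p.image ⇑σ) := by
  intro τ hτ hfix
  have key : σ⁻¹ * τ * σ = 1 := by
    apply hB _ (mul_mem (mul_mem (inv_mem hσ) hτ) hσ)
    intro p hp
    have h1 : (p.image ⇑σ).image ⇑τ = p.image ⇑σ :=
      hfix _ (Finset.mem_image_of_mem _ hp)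
    calc p.image ⇑(σ⁻¹ * τ * σ) = ((p.image ⇑σ).image ⇑τ).image ⇑σ⁻¹ := by
            simp [Finset.image_image, Function.comp_def]
      _ = (p.image ⇑σ).image ⇑σ⁻¹ := by rw [h1]
      _ = p := by simp [Finset.image_image, Function.comp_def]
  have : τ = σ * (σ⁻¹ * τ * σ) * σ⁻¹ := by group
  rw [this, key]; group

/-- The set of unordered distinguishing partitions with `D` parts. -/
def Tset {k : ℕ} (P : Subgroup (Equiv.Perm (Fin k))) (D : ℕ) :
    Set (Finset (Finset (Fin k))) :=
  {C | IsPart k C ∧ IsDisting P C ∧ C.card = D}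

noncomputable def eC {k D : ℕ} {P : Subgroup (Equiv.Perm (Fin k))} (C : Tset P D) :
    ↥(C.1) ≃ Fin D :=
  Finset.equivFinOfCardEq C.2.2.2

/-- The permutation of `Fin D` induced by an ordering `f` of the parts of `C`. -/
noncomputable def ordPerm {k D : ℕ} {P : Subgroup (Equiv.Perm (Fin k))}
    (C : Tset P D) (f : Fin D → Finset (Fin k)) (hf : ∀ i, f i ∈ C.1)
    (hfi : Function.Injective f) : Equiv.Perm (Fin D) :=
  Equiv.ofBijective (fun i => eC C ⟨f i, hf i⟩)
    (Finite.injective_iff_bijective.mp fun i j hij =>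
      hfi (Subtype.ext_iff.mp ((eC C).injective hij)))

lemma ordPerm_eq {k D : ℕ} {P : Subgroup (Equiv.Perm (Fin k))}
    {C C' : Tset P D} (hCC : C = C') {f g : Fin D → Finset (Fin k)}
    (hf : ∀ i, f i ∈ C.1) (hg : ∀ i, g i ∈ C'.1)
    (hfi : Function.Injective f) (hgi : Function.Injective g)
    (h : ordPerm C f hf hfi = ordPerm C' g hg hgi) : f = g := by
  subst hCC
  funext i
  have h2 : eC C ⟨f i, hf i⟩ = eC C ⟨g i, hg i⟩ :=
    congrArg (fun π : Equiv.Perm (Fin D) => π i) h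
  exact Subtype.ext_iff.mp ((eC C).injective h2)

lemma key_orbit {k D : ℕ} (P : Subgroup (Equiv.Perm (Fin k)))
    (h : tpart P D * Nat.factorial D = Nat.card P)
    {B : Finset (Finset (Fin k))} (hBp : IsPart k B) (hBd : IsDisting P B) (hBc : B.card = D)
    {f g : Fin D → Finset (Fin k)} (hf : ∀ i, f i ∈ B) (hg : ∀ i, g i ∈ B)
    (hfi : Function.Injective f) (hgi : Function.Injective g) :
    ∃ σ ∈ P, ∀ i, (f i).image ⇑σ = g i := by
  classical
  have hfB : Finset.image f Finset.univ = B := by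
    apply Finset.eq_of_subset_of_card_le
    · intro p hp
      obtain ⟨i, _, rfl⟩ := Finset.mem_image.mp hp
      exact hf i
    · rw [Finset.card_image_of_injective _ hfi, Finset.card_univ, Fintype.card_fin, hBc]
  have hfsurj : ∀ p ∈ B, ∃ i, f i = p := by
    intro p hp
    rw [← hfB] at hp
    obtain ⟨i, _, rfl⟩ := Finset.mem_image.mp hp
    exact ⟨i, rfl⟩
  have hmem : ∀ σ : P, (B.image fun p => p.image ⇑(σ : Equiv.Perm (Fin k))) ∈ Tset P D :=
    fun σ => ⟨isPart_image _ hBp, isDisting_image P σ.2 hBd, by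
      rw [Finset.card_image_of_injective _
        (Finset.image_injective (σ : Equiv.Perm (Fin k)).injective), hBc]⟩
  have hfmem : ∀ (σ : P) (i : Fin D), (f i).image ⇑(σ : Equiv.Perm (Fin k)) ∈
      (B.image fun p => p.image ⇑(σ : Equiv.Perm (Fin k))) :=
    fun σ i => Finset.mem_image_of_mem _ (hf i)
  have hfinj2 : ∀ σ : P,
      Function.Injective (fun i => (f i).image ⇑(σ : Equiv.Perm (Fin k))) :=
    fun σ i j hij =>
      hfi (Finset.image_injective (σ : Equiv.Perm (Fin k)).injective hij)
  -- the injective map from `P` into `Tset × Perm (Fin D)`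
  have hΦinj : Function.Injective (fun σ : P =>
      ((⟨_, hmem σ⟩ : Tset P D),
        ordPerm (⟨_, hmem σ⟩ : Tset P D) _ (hfmem σ) (hfinj2 σ))) := by
    intro σ τ hστ
    have h1 : (⟨_, hmem σ⟩ : Tset P D) = ⟨_, hmem τ⟩ := congrArg Prod.fst hστ
    have h2 : (fun i => (f i).image ⇑(σ : Equiv.Perm (Fin k))) =
        (fun i => (f i).image ⇑(τ : Equiv.Perm (Fin k))) :=
      ordPerm_eq h1 (hfmem σ) (hfmem τ) (hfinj2 σ) (hfinj2 τ) (congrArg Prod.snd hστ)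
    have hfix : ∀ p ∈ B,
        p.image ⇑(((τ : Equiv.Perm (Fin k)))⁻¹ * (σ : Equiv.Perm (Fin k))) = p := by
      intro p hp
      obtain ⟨i, rfl⟩ := hfsurj p hp
      have hi : (f i).image ⇑(σ : Equiv.Perm (Fin k)) =
          (f i).image ⇑(τ : Equiv.Perm (Fin k)) := congrFun h2 i
      calc (f i).image ⇑(((τ : Equiv.Perm (Fin k)))⁻¹ * (σ : Equiv.Perm (Fin k)))
          = ((f i).image ⇑(σ : Equiv.Perm (Fin k))).image
              ⇑((τ : Equiv.Perm (Fin k)))⁻¹ := by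
            simp [Finset.image_image, Function.comp_def]
        _ = ((f i).image ⇑(τ : Equiv.Perm (Fin k))).image
              ⇑((τ : Equiv.Perm (Fin k)))⁻¹ := by rw [hi]
        _ = f i := by simp [Finset.image_image, Function.comp_def]
    have hone : ((τ : Equiv.Perm (Fin k)))⁻¹ * (σ : Equiv.Perm (Fin k)) = 1 :=
      hBd _ (mul_mem (inv_mem τ.2) σ.2) hfix
    have : (τ : Equiv.Perm (Fin k)) = (σ : Equiv.Perm (Fin k)) := by
      rwa [inv_mul_eq_one] at hone
    exact Subtype.ext this.symm
  have hperm : Nat.card (Equiv.Perm (Fin D)) = Nat.factorial D := by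
    rw [Nat.card_eq_fintype_card, Fintype.card_perm, Fintype.card_fin]
  have htp : tpart P D = Nat.card ↥(Tset P D) := rfl
  have hcards : Nat.card P = Nat.card (↥(Tset P D) × Equiv.Perm (Fin D)) := by
    rw [Nat.card_prod, hperm, ← h, htp]
  have hbij : Function.Bijective (fun σ : P =>
      ((⟨_, hmem σ⟩ : Tset P D),
        ordPerm (⟨_, hmem σ⟩ : Tset P D) _ (hfmem σ) (hfinj2 σ))) :=
    (Nat.bijective_iff_injective_and_card _).mpr ⟨hΦinj, hcards⟩
  obtain ⟨σ, hσ⟩ := hbij.2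
    ((⟨B, hBp, hBd, hBc⟩ : Tset P D), ordPerm (⟨B, hBp, hBd, hBc⟩ : Tset P D) g hg hgi)
  have h1 : (⟨_, hmem σ⟩ : Tset P D) = ⟨B, hBp, hBd, hBc⟩ := congrArg Prod.fst hσ
  have h2 : (fun i => (f i).image ⇑(σ : Equiv.Perm (Fin k))) = g :=
    ordPerm_eq h1 (hfmem σ) hg (hfinj2 σ) hgi (congrArg Prod.snd hσ)
  exact ⟨σ, σ.2, fun i => congrFun h2 i⟩

/-- If `t_{D(P)} = |P|/D(P)!` then every distinguishing partition of `{1,...,k}` for `P`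
into `D(P)` parts has all parts of equal size; in particular `D(P)` divides `k`. -/
theorem stmt5 {k : ℕ} (P : Subgroup (Equiv.Perm (Fin k)))
    (h : tpart P (distNum P) * Nat.factorial (distNum P) = Nat.card P) :
    (∀ B : Finset (Finset (Fin k)), IsPart k B → IsDisting P B → B.card = distNum P →
      ∀ p ∈ B, ∀ q ∈ B, p.card = q.card) ∧ distNum P ∣ k := by
  classical
  have part1 : ∀ B : Finset (Finset (Fin k)), IsPart k B → IsDisting P B →
      B.card = distNum P → ∀ p ∈ B, ∀ q ∈ B, p.card = q.card := by
    intro B hBp hBd hBc p hp q hq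
    have hDpos : 0 < distNum P := hBc ▸ Finset.card_pos.mpr ⟨p, hp⟩
    set D := distNum P with hD
    let z : Fin D := ⟨0, hDpos⟩
    let e : ↥B ≃ Fin D := B.equivFinOfCardEq hBc
    let fp : Fin D → Finset (Fin k) := fun i => ↑(e.symm (Equiv.swap z (e ⟨p, hp⟩) i))
    let fq : Fin D → Finset (Fin k) := fun i => ↑(e.symm (Equiv.swap z (e ⟨q, hq⟩) i))
    have hfp : ∀ i, fp i ∈ B := fun i => (e.symm _).2
    have hfq : ∀ i, fq i ∈ B := fun i => (e.symm _).2
    have hfpi : Function.Injective fp := fun i j hij =>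
      (Equiv.swap z (e ⟨p, hp⟩)).injective (e.symm.injective (Subtype.ext hij))
    have hfqi : Function.Injective fq := fun i j hij =>
      (Equiv.swap z (e ⟨q, hq⟩)).injective (e.symm.injective (Subtype.ext hij))
    obtain ⟨σ, hσP, hσ⟩ := key_orbit P h hBp hBd hBc hfp hfq hfpi hfqi
    have hz := hσ z
    have hfpz : fp z = p := by simp [fp, Equiv.swap_apply_left]
    have hfqz : fq z = q := by simp [fq, Equiv.swap_apply_left]
    rw [hfpz, hfqz] at hz
    rw [← hz, Finset.card_image_of_injective _ σ.injective]
  refine ⟨part1, ?_⟩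
  rcases Nat.eq_zero_or_pos k with hk | hk
  · subst hk; exact dvd_zero _
  · have hne : {m | ∃ B : Finset (Finset (Fin k)),
        IsPart k B ∧ IsDisting P B ∧ B.card = m}.Nonempty := by
      refine ⟨(Finset.image (fun i : Fin k => ({i} : Finset (Fin k))) Finset.univ).card,
        Finset.image (fun i : Fin k => ({i} : Finset (Fin k))) Finset.univ,
        ⟨?_, ?_, ?_⟩, ?_, rfl⟩
      · intro p hp
        obtain ⟨i, _, rfl⟩ := Finset.mem_image.mp hp
        exact Finset.singleton_nonempty i
      · intro p hp q hq hne
        obtain ⟨i, _, rfl⟩ := Finset.mem_image.mp hp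
        obtain ⟨j, _, rfl⟩ := Finset.mem_image.mp hq
        rw [Finset.disjoint_singleton]
        intro hij
        exact hne (by rw [hij])
      · intro i
        exact ⟨{i}, Finset.mem_image_of_mem _ (Finset.mem_univ i), Finset.mem_singleton_self i⟩
      · intro σ hσ hfix
        ext i
        have h2 : σ i = i := by
          have := hfix {i} (Finset.mem_image_of_mem _ (Finset.mem_univ i))
          simpa using this
        simp [h2]
    obtain ⟨B, hBp, hBd, hBc⟩ := Nat.sInf_mem hne
    have hBc' : B.card = distNum P := hBc
    have hBne : B.Nonempty := by
      obtain ⟨p, hp, _⟩ := hBp.2.2 ⟨0, hk⟩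
      exact ⟨p, hp⟩
    obtain ⟨p₀, hp₀⟩ := hBne
    have hcover : (Finset.univ : Finset (Fin k)) = B.biUnion id := by
      ext i
      simp only [Finset.mem_biUnion, id, Finset.mem_univ, true_iff]
      exact hBp.2.2 i
    have hsum : ∑ p ∈ B, p.card = k := by
      have hdisj := Finset.card_biUnion
        (fun p hp q hq hpq => hBp.2.1 p hp q hq hpq) (s := B) (t := id)
      simp only [id_eq] at hdisj
      rw [← hdisj, ← hcover, Finset.card_univ, Fintype.card_fin]
    have hconst : ∀ q ∈ B, q.card = p₀.card :=
      fun q hq => part1 B hBp hBd hBc' q hq p₀ hp₀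
    refine ⟨p₀.card, ?_⟩
    calc k = ∑ p ∈ B, p.card := hsum.symm
      _ = ∑ _p ∈ B, p₀.card := Finset.sum_congr rfl hconst
      _ = B.card * p₀.card := by rw [Finset.sum_const, smul_eq_mul]
      _ = distNum P * p₀.card := by rw [hBc']
end

section
/- Let L ≤ Sym(Γ) be a finite primitive permutation group with b(L) = 2 and r = r(L) ≥ 2 regular suborbits. Assume that the Saxl graph of every finite base-two primitive group has diameter at most 2. Then for all α, β ∈ Γ, the set Σ_L(α) = {γ : L_α ∩ L_γ = 1} meets every regular L_β-orbit on Γ. -/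
set_option linter.unusedSectionVars false

/-- The wreath product `L ≀ P` in its product action on `Γ^k`, realised as a set of
permutations of `Fin k → Γ`: the `i^σ`-th coordinate of the image of `γ` is `z i (γ i)`. -/
def WreathSet {Γ : Type} (k : ℕ) (L : Subgroup (Equiv.Perm Γ))
    (P : Subgroup (Equiv.Perm (Fin k))) : Set (Equiv.Perm (Fin k → Γ)) :=
  {g | ∃ (σ : Equiv.Perm (Fin k)) (z : Fin k → Equiv.Perm Γ),
    σ ∈ P ∧ (∀ i, z i ∈ L) ∧ g = Equiv.piCongr σ z}

/-- `(p.1, p.2)` is a regular pair (an ordered base of size 2) for the permutation set `S`. -/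
def IsRegPair {Ω : Type*} (S : Set (Equiv.Perm Ω)) (p : Ω × Ω) : Prop :=
  ∀ g ∈ S, g p.1 = p.1 → g p.2 = p.2 → g = 1

/-- The number of regular orbits of the permutation set `S` on ordered pairs, i.e. the
number of regular suborbits. -/
noncomputable def regCount {Ω : Type*} (S : Set (Equiv.Perm Ω)) : ℕ :=
  Set.ncard {O : Set (Ω × Ω) | ∃ p : Ω × Ω, IsRegPair S p ∧
    O = {q | ∃ g ∈ S, q = (g p.1, g p.2)}}

/-- A subgroup `G ≤ Sym(Ω)` is primitive: it is transitive and every block (a set `B` such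
that each `g ∈ G` maps `B` to itself or to a set disjoint from `B`) is trivial. -/
def IsPrimitiveSub {Ω : Type*} (G : Subgroup (Equiv.Perm Ω)) : Prop :=
  (∀ a b : Ω, ∃ g ∈ G, g a = b) ∧
  ∀ B : Set Ω, (∀ g ∈ G, ⇑g '' B = B ∨ Disjoint (⇑g '' B) B) →
    B.Subsingleton ∨ B = Set.univ

namespace Stmt17Aux

open Equiv

variable {Γ : Type}

/-- abbreviation with the correct elaboration. -/
def pc {k : ℕ} (σ : Perm (Fin k)) (z : Fin k → Perm Γ) : Perm (Fin k → Γ) :=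
  Equiv.piCongr σ z

lemma pc_def {k : ℕ} (σ : Perm (Fin k)) (z : Fin k → Perm Γ) :
    pc σ z = Equiv.piCongr σ z := rfl

/-- pointwise formula for `piCongr` of permutations. -/
lemma pc_eval {k : ℕ} (σ : Perm (Fin k)) (z : Fin k → Perm Γ)
    (f : Fin k → Γ) (j : Fin k) :
    pc σ z f j = z (σ.symm j) (f (σ.symm j)) := by
  have := Equiv.piCongr_apply_apply (W := fun _ => Γ) (Z := fun _ => Γ) σ z f (σ.symm j)
  rw [pc_def]; simpa using this

lemma pc_mul {k : ℕ} (σ σ' : Perm (Fin k)) (z z' : Fin k → Perm Γ) :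
    pc σ z * pc σ' z' = pc (σ * σ') (fun i => z (σ' i) * z' i) := by
  apply Equiv.ext; intro f; funext j
  have h1 : (pc σ z * pc σ' z') f j = pc σ z (pc σ' z' f) j := rfl
  rw [h1, pc_eval, pc_eval, pc_eval]
  have h2 : (σ * σ').symm j = σ'.symm (σ.symm j) := rfl
  rw [h2]
  simp [Perm.mul_apply]

lemma pc_one {k : ℕ} : (pc 1 (fun _ => 1) : Perm (Fin k → Γ)) = 1 := by
  apply Equiv.ext; intro f; funext j
  rw [pc_eval]; rfl

/-- The wreath product as a subgroup. -/
def Gr (k : ℕ) (L : Subgroup (Perm Γ)) : Subgroup (Perm (Fin k → Γ)) where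
  carrier := WreathSet k L ⊤
  one_mem' := ⟨1, fun _ => 1, trivial, fun _ => L.one_mem, pc_one.symm⟩
  mul_mem' := by
    rintro a b ⟨σ, z, -, hz, rfl⟩ ⟨σ', z', -, hz', rfl⟩
    exact ⟨σ * σ', fun i => z (σ' i) * z' i, trivial,
      fun i => L.mul_mem (hz _) (hz' _), pc_mul σ σ' z z'⟩
  inv_mem' := by
    rintro a ⟨σ, z, -, hz, rfl⟩
    have h : pc σ z * pc σ⁻¹ (fun i => (z (σ⁻¹ i))⁻¹) = 1 := by
      rw [pc_mul]
      apply Equiv.ext; intro f; funext j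
      rw [pc_eval]; simp; rfl
    refine ⟨σ⁻¹, fun i => (z (σ⁻¹ i))⁻¹, trivial, fun i => L.inv_mem (hz _),
      (eq_inv_of_mul_eq_one_right h).symm⟩

lemma mem_Gr {k : ℕ} {L : Subgroup (Perm Γ)} (σ : Perm (Fin k)) (z : Fin k → Perm Γ)
    (hz : ∀ i, z i ∈ L) : pc σ z ∈ Gr k L :=
  ⟨σ, z, trivial, hz, rfl⟩

lemma Gr_mem_iff {k : ℕ} {L : Subgroup (Perm Γ)} {g : Perm (Fin k → Γ)} :
    g ∈ Gr k L ↔ ∃ σ z, (∀ i, z i ∈ L) ∧ g = pc σ z := by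
  constructor
  · rintro ⟨σ, z, -, hz, rfl⟩; exact ⟨σ, z, hz, rfl⟩
  · rintro ⟨σ, z, hz, rfl⟩; exact mem_Gr σ z hz



section FactF

variable [Fintype Γ]

def stab (L : Subgroup (Perm Γ)) (a : Γ) : Set (Perm Γ) := {g | g ∈ L ∧ g a = a}

def fixSet (L : Subgroup (Perm Γ)) (a : Γ) : Set Γ := {x | ∀ h ∈ stab L a, h x = x}

lemma stab_conj (L : Subgroup (Perm Γ)) {a : Γ} {g : Perm Γ} (hg : g ∈ L) :
    stab L (g a) = (fun h => g * h * g⁻¹) '' stab L a := by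
  ext h; constructor
  · rintro ⟨hL, hfix⟩
    refine ⟨g⁻¹ * h * g, ⟨L.mul_mem (L.mul_mem (L.inv_mem hg) hL) hg, ?_⟩, by group⟩
    show g⁻¹ (h (g a)) = a
    rw [hfix]; simp
  · rintro ⟨h', ⟨hL, hfix⟩, rfl⟩
    refine ⟨L.mul_mem (L.mul_mem hg hL) (L.inv_mem hg), ?_⟩
    show g (h' (g⁻¹ (g a))) = g a
    simp [hfix]

lemma stab_ncard_eq (L : Subgroup (Perm Γ)) (htrans : ∀ a b : Γ, ∃ g ∈ L, g a = b)
    (a b : Γ) : (stab L a).ncard = (stab L b).ncard := by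
  obtain ⟨g, hg, rfl⟩ := htrans a b
  rw [stab_conj L hg]
  exact (Set.ncard_image_of_injective _ (fun x y hxy => by
    have h1 : g * x * g⁻¹ = g * y * g⁻¹ := hxy
    exact mul_left_cancel (mul_right_cancel h1))).symm

lemma stab_eq_of_mem_fix (L : Subgroup (Perm Γ)) (htrans : ∀ a b : Γ, ∃ g ∈ L, g a = b)
    {a x : Γ} (hx : x ∈ fixSet L a) : stab L a = stab L x := by
  have hsub : stab L a ⊆ stab L x := fun h hh => ⟨hh.1, hx h hh⟩
  exact (Set.eq_of_subset_of_ncard_le hsub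
    (le_of_eq (stab_ncard_eq L htrans x a)) (Set.toFinite _))

lemma fix_eq_of_mem_fix (L : Subgroup (Perm Γ)) (htrans : ∀ a b : Γ, ∃ g ∈ L, g a = b)
    {a x : Γ} (hx : x ∈ fixSet L a) : fixSet L a = fixSet L x := by
  unfold fixSet; rw [stab_eq_of_mem_fix L htrans hx]

lemma image_fix (L : Subgroup (Perm Γ)) {a : Γ} {g : Perm Γ} (hg : g ∈ L) :
    ⇑g '' fixSet L a = fixSet L (g a) := by
  ext y; constructor
  · rintro ⟨x, hx, rfl⟩
    intro h hh
    rw [stab_conj L hg] at hh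
    obtain ⟨h', hh', rfl⟩ := hh
    show g (h' (g⁻¹ (g x))) = g x
    simp [hx h' hh']
  · intro hy
    refine ⟨g⁻¹ y, ?_, by simp⟩
    intro h hh
    have : (g * h * g⁻¹) y = y := hy _ (by rw [stab_conj L hg]; exact ⟨h, hh, rfl⟩)
    have h2 : g (h (g⁻¹ y)) = y := this
    show h (g⁻¹ y) = g⁻¹ y
    calc h (g⁻¹ y) = g⁻¹ (g (h (g⁻¹ y))) := by simp
    _ = g⁻¹ y := by rw [h2]

lemma factF (L : Subgroup (Perm Γ)) (hLprim : IsPrimitiveSub L)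
    (hnr : ∃ h : Perm Γ, h ∈ L ∧ h ≠ 1 ∧ ∃ c, h c = c) :
    ∀ a b : Γ, b ≠ a → ∃ h, h ∈ L ∧ h a = a ∧ h b ≠ b := by
  intro a b hba
  by_contra hcon; push_neg at hcon
  have hbfix : b ∈ fixSet L a := fun h hh => hcon h hh.1 hh.2
  have hafix : a ∈ fixSet L a := fun h hh => hh.2
  have hblock : (fixSet L a).Subsingleton ∨ fixSet L a = Set.univ := by
    refine hLprim.2 _ (fun g hg => ?_)
    by_cases hd : Disjoint (⇑g '' fixSet L a) (fixSet L a)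
    · exact Or.inr hd
    · left
      rw [Set.not_disjoint_iff] at hd
      obtain ⟨x, hx1, hx2⟩ := hd
      rw [image_fix L hg] at hx1 ⊢
      rw [fix_eq_of_mem_fix L hLprim.1 hx1, fix_eq_of_mem_fix L hLprim.1 hx2]
  rcases hblock with hss | huniv
  · exact hba (hss hbfix hafix)
  · obtain ⟨h, hhL, hne, c, hc⟩ := hnr
    obtain ⟨g, hg, rfl⟩ := hLprim.1 c a
    have hmem : g * h * g⁻¹ ∈ stab L (g c) := by
      rw [stab_conj L hg]; exact ⟨h, ⟨hhL, hc⟩, rfl⟩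
    have : g * h * g⁻¹ = 1 := by
      apply Equiv.ext; intro x
      have : x ∈ fixSet L (g c) := by rw [huniv]; trivial
      exact (this _ hmem).trans rfl |>.symm ▸ (this _ hmem)
    have : h = 1 := by
      have h1 : g * h * g⁻¹ = g * 1 * g⁻¹ := by rw [this]; group
      exact mul_left_cancel (mul_right_cancel h1)
    exact hne this

end FactF



section Prim

variable [Fintype Γ]

def bz {k : ℕ} (i : Fin k) (h : Perm Γ) : Fin k → Perm Γ := fun m => if m = i then h else 1

lemma pc_single_apply {k : ℕ} (i : Fin k) (h : Perm Γ) (f : Fin k → Γ) :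
    pc 1 (bz i h) f = Function.update f i (h (f i)) := by
  funext j
  rw [pc_eval]
  have hs : (1 : Perm (Fin k)).symm j = j := rfl
  rw [hs]
  by_cases hj : j = i
  · subst hj; simp [bz]
  · simp [bz, hj, Function.update_of_ne hj]

lemma bz_mem {k : ℕ} {L : Subgroup (Perm Γ)} (i : Fin k) {h : Perm Γ} (hh : h ∈ L) :
    ∀ m, bz i h m ∈ L := by
  intro m; by_cases hm : m = i <;> simp [bz, hm, hh, L.one_mem]

lemma pc_swap_apply {k : ℕ} (i i' : Fin k) (f : Fin k → Γ) (j : Fin k) :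
    pc (Equiv.swap i i') (fun _ => 1) f j = f (Equiv.swap i i' j) := by
  rw [pc_eval]
  have : (Equiv.swap i i').symm j = Equiv.swap i i' j := by rw [Equiv.symm_swap]
  rw [this]; rfl

variable {k : ℕ} {L : Subgroup (Perm Γ)} {B : Set (Fin k → Γ)}

/-- if an element of `G` fixes a point of `B`, it maps `B` into `B`. -/
lemma block_maps (hB : ∀ g ∈ Gr k L, ⇑g '' B = B ∨ Disjoint (⇑g '' B) B)
    {g : Perm (Fin k → Γ)} (hg : g ∈ Gr k L) {x : Fin k → Γ} (hx : x ∈ B)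
    (hfix : g x = x) : ∀ y ∈ B, g y ∈ B := by
  intro y hy
  rcases hB g hg with heq | hdisj
  · rw [← heq]; exact ⟨y, hy, rfl⟩
  · exact absurd (Set.disjoint_left.mp hdisj ⟨x, hx, hfix⟩ hx) (fun h => h)

lemma line_mem (hLprim : IsPrimitiveSub L)
    (hnr : ∃ h : Perm Γ, h ∈ L ∧ h ≠ 1 ∧ ∃ c, h c = c)
    (hB : ∀ g ∈ Gr k L, ⇑g '' B = B ∨ Disjoint (⇑g '' B) B)
    {p q : Fin k → Γ} (hp : p ∈ B) (hq : q ∈ B) {i : Fin k} (hne : p i ≠ q i) :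
    ∀ c, Function.update p i c ∈ B := by
  set C : Set Γ := {c | Function.update p i c ∈ B} with hC
  have key : ∀ (gL : Perm Γ) (c : Γ), pc 1 (bz i gL) (Function.update p i c)
      = Function.update p i (gL c) := by
    intro gL c
    rw [pc_single_apply]
    simp [Function.update_idem]
  have hCblock : C.Subsingleton ∨ C = Set.univ := by
    refine hLprim.2 C (fun gL hgL => ?_)
    have hgG : pc 1 (bz i gL) ∈ Gr k L := mem_Gr _ _ (bz_mem i hgL)
    rcases hB _ hgG with heq | hdisj
    · left
      ext c; constructor
      · rintro ⟨d, hd, rfl⟩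
        show Function.update p i (gL d) ∈ B
        rw [← key]
        rw [← heq]
        exact ⟨_, hd, rfl⟩
      · intro hc
        refine ⟨gL⁻¹ c, ?_, by simp⟩
        show Function.update p i (gL⁻¹ c) ∈ B
        have h1 : Function.update p i c ∈ ⇑(pc 1 (bz i gL)) '' B := by rw [heq]; exact hc
        obtain ⟨b, hb, hbe⟩ := h1
        have h2 : pc 1 (bz i gL) (Function.update p i (gL⁻¹ c)) = Function.update p i c := by
          rw [key]; simp
        have : b = Function.update p i (gL⁻¹ c) :=
          (pc 1 (bz i gL)).injective (by rw [hbe, h2])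
        rwa [← this]
    · right
      rw [Set.disjoint_left]
      rintro c ⟨d, hd, rfl⟩ hcC
      refine Set.disjoint_left.mp hdisj ⟨Function.update p i d, hd, key gL d⟩ hcC
  have hpC : p i ∈ C := by show Function.update p i (p i) ∈ B; rwa [Function.update_eq_self]
  obtain ⟨h, hhL, hfixq, hmovp⟩ := factF L hLprim hnr (q i) (p i) hne
  have hqfix : pc 1 (bz i h) q = q := by
    rw [pc_single_apply, hfixq, Function.update_eq_self]
  have hp'B : Function.update p i (h (p i)) ∈ B := by
    rw [← pc_single_apply]
    exact block_maps hB (mem_Gr _ _ (bz_mem i hhL)) hq hqfix p hp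
  have hp'C : h (p i) ∈ C := hp'B
  rcases hCblock with hss | huniv
  · exact absurd (hss hp'C hpC) hmovp
  · intro c
    have : c ∈ C := by rw [huniv]; trivial
    exact this

/-- rotate a full line in direction `i` to direction `i'`. -/
lemma line_rotate (hLprim : IsPrimitiveSub L)
    (hnr : ∃ h : Perm Γ, h ∈ L ∧ h ≠ 1 ∧ ∃ c, h c = c)
    (hB : ∀ g ∈ Gr k L, ⇑g '' B = B ∨ Disjoint (⇑g '' B) B)
    {p : Fin k → Γ} {i : Fin k} (hline : ∀ c, Function.update p i c ∈ B)
    (i' : Fin k) : ∀ c, Function.update p i' c ∈ B := by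
  obtain ⟨x, y, hxy⟩ : ∃ x y : Γ, x ≠ y := by
    obtain ⟨h, -, hne, -⟩ := hnr
    by_contra hcon; push_neg at hcon
    exact hne (Equiv.ext fun z => hcon _ _)
  by_cases hii : i' = i
  · subst hii; exact hline
  intro c
  by_cases hcp : c = p i'
  · rw [hcp, Function.update_eq_self]
    have := hline (p i)
    rwa [Function.update_eq_self] at this
  -- swap element
  set g : Perm (Fin k → Γ) := pc (Equiv.swap i i') (fun _ => 1) with hg
  have hgG : g ∈ Gr k L := mem_Gr _ _ (fun _ => L.one_mem)
  set qf : Fin k → Γ := Function.update p i (p i') with hqf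
  have hqfB : qf ∈ B := hline (p i')
  have hfix : g qf = qf := by
    funext j
    rw [hg, pc_swap_apply]
    rcases eq_or_ne j i with rfl | hji
    · simp [hqf, Equiv.swap_apply_left, Function.update_of_ne (Ne.symm (fun h => hii h.symm))]
    rcases eq_or_ne j i' with rfl | hji'
    · simp [hqf, Equiv.swap_apply_right, Function.update_of_ne (Ne.symm hji)]
      rw [Function.update_of_ne hii]
    · rw [Equiv.swap_apply_of_ne_of_ne hji hji']
  -- g maps line to new points
  have himg : ∀ d, Function.update qf i' d ∈ B := by
    intro d
    have h1 : g (Function.update p i d) = Function.update qf i' d := by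
      funext j
      rw [hg, pc_swap_apply]
      rcases eq_or_ne j i with rfl | hji
      · rw [Equiv.swap_apply_left]
        rw [Function.update_of_ne (Ne.symm (fun h => hii h.symm))]
        rw [Function.update_of_ne (fun h => hii h.symm)]
        simp [hqf]
      rcases eq_or_ne j i' with rfl | hji'
      · rw [Equiv.swap_apply_right]
        simp [Function.update_self]
      · rw [Equiv.swap_apply_of_ne_of_ne hji hji']
        rw [Function.update_of_ne hji, Function.update_of_ne hji']
        simp [hqf, Function.update_of_ne hji]
    rw [← h1]
    exact block_maps hB hgG hqfB hfix _ (hline d)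
  -- pick d ≠ p i'
  obtain ⟨d, hd⟩ : ∃ d : Γ, d ≠ p i' := by
    rcases eq_or_ne x (p i') with rfl | hx
    · exact ⟨y, Ne.symm hxy⟩
    · exact ⟨x, hx⟩
  have hu : Function.update qf i' d ∈ B := himg d
  have hpB : p ∈ B := by have := hline (p i); rwa [Function.update_eq_self] at this
  have hpi' : p i' ≠ (Function.update qf i' d) i' := by
    rw [Function.update_self]; exact Ne.symm hd
  have := line_mem hLprim hnr hB hpB hu hpi'
  exact this c

lemma fill (hLprim : IsPrimitiveSub L)
    (hnr : ∃ h : Perm Γ, h ∈ L ∧ h ≠ 1 ∧ ∃ c, h c = c)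
    (hB : ∀ g ∈ Gr k L, ⇑g '' B = B ∨ Disjoint (⇑g '' B) B)
    {p : Fin k → Γ} (hp : p ∈ B)
    (hlines : ∀ (i : Fin k) (c : Γ), Function.update p i c ∈ B) :
    ∀ t, t ∈ B := by
  classical
  have key : ∀ (n : ℕ) (t : Fin k → Γ),
      (Finset.univ.filter (fun j => t j ≠ p j)).card ≤ n → t ∈ B := by
    intro n
    induction n with
    | zero =>
      intro t ht
      have ht0 : (Finset.univ.filter (fun j => t j ≠ p j)) = ∅ :=
        Finset.card_eq_zero.mp (Nat.le_zero.mp ht)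
      have : t = p := by
        funext j
        by_contra hj
        have : j ∈ Finset.univ.filter (fun j => t j ≠ p j) := by
          simp [hj]
        rw [ht0] at this
        exact absurd this (Finset.notMem_empty j)
      rwa [this]
    | succ n ih =>
      intro t ht
      by_cases htp : t = p
      · rwa [htp]
      obtain ⟨i, hi⟩ : ∃ i, t i ≠ p i := by
        by_contra hcon; push_neg at hcon
        exact htp (funext hcon)
      set t' := Function.update t i (p i) with ht'
      have hsub : (Finset.univ.filter (fun j => t' j ≠ p j))
          ⊆ (Finset.univ.filter (fun j => t j ≠ p j)).erase i := by
        intro j hj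
        rw [Finset.mem_filter] at hj
        have hji : j ≠ i := by
          intro hji; subst hji
          exact hj.2 (by rw [ht', Function.update_self])
        rw [Finset.mem_erase, Finset.mem_filter]
        refine ⟨hji, Finset.mem_univ j, ?_⟩
        rw [ht', Function.update_of_ne hji] at hj
        exact hj.2
      have hcard : (Finset.univ.filter (fun j => t' j ≠ p j)).card ≤ n := by
        calc (Finset.univ.filter (fun j => t' j ≠ p j)).card
            ≤ ((Finset.univ.filter (fun j => t j ≠ p j)).erase i).card :=
              Finset.card_le_card hsub
          _ = (Finset.univ.filter (fun j => t j ≠ p j)).card - 1 :=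
              Finset.card_erase_of_mem (by simp [hi])
          _ ≤ n := by omega
      have ht'B : t' ∈ B := ih t' hcard
      have huB : Function.update p i (t i) ∈ B := hlines i (t i)
      have hne : t' i ≠ (Function.update p i (t i)) i := by
        rw [ht', Function.update_self, Function.update_self]
        exact Ne.symm hi
      have hlin := line_mem hLprim hnr hB ht'B huB hne
      have := hlin (t i)
      rwa [ht', Function.update_idem, Function.update_eq_self] at this
  exact fun t => key _ t le_rfl

lemma primG (hLprim : IsPrimitiveSub L)
    (hnr : ∃ h : Perm Γ, h ∈ L ∧ h ≠ 1 ∧ ∃ c, h c = c) :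
    IsPrimitiveSub (Gr k L) := by
  constructor
  · intro a b
    choose z hz hzab using fun i => hLprim.1 (a i) (b i)
    refine ⟨pc 1 z, mem_Gr _ _ hz, ?_⟩
    funext j
    rw [pc_eval]
    exact hzab j
  · intro B hB
    by_cases hss : B.Subsingleton
    · exact Or.inl hss
    right
    rw [Set.not_subsingleton_iff] at hss
    obtain ⟨p, hp, q, hq, hpq⟩ := hss
    obtain ⟨i, hi⟩ : ∃ i, p i ≠ q i := by
      by_contra hcon; push_neg at hcon
      exact hpq (funext hcon)
    have hline := line_mem hLprim hnr hB hp hq hi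
    have hlines := fun i' => line_rotate hLprim hnr hB hline i'
    ext t
    simp only [Set.mem_univ, iff_true]
    exact fill hLprim hnr hB hp hlines t

end Prim

section Orbits

variable (L : Subgroup (Perm Γ))

def orb (p : Γ × Γ) : Set (Γ × Γ) :=
  {q | ∃ g ∈ (L : Set (Perm Γ)), q = (g p.1, g p.2)}

def OrbSet : Set (Set (Γ × Γ)) :=
  {O | ∃ p, IsRegPair (L : Set (Perm Γ)) p ∧ O = orb L p}

lemma regCount_eq : regCount (L : Set (Perm Γ)) = (OrbSet L).ncard := rfl

variable {L}

lemma mem_orb_self (p : Γ × Γ) : p ∈ orb L p :=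
  ⟨1, L.one_mem, by simp⟩

lemma orb_eq_of_mem {p q : Γ × Γ} (hq : q ∈ orb L p) : orb L q = orb L p := by
  obtain ⟨g, hg, rfl⟩ := hq
  ext r; constructor
  · rintro ⟨h, hh, rfl⟩
    exact ⟨h * g, L.mul_mem hh hg, rfl⟩
  · rintro ⟨h, hh, rfl⟩
    refine ⟨h * g⁻¹, L.mul_mem hh (L.inv_mem hg), ?_⟩
    simp [Perm.mul_apply]

lemma isRegPair_of_mem_orb {p q : Γ × Γ} (hp : IsRegPair (L : Set (Perm Γ)) p)
    (hq : q ∈ orb L p) : IsRegPair (L : Set (Perm Γ)) q := by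
  obtain ⟨g, hg, rfl⟩ := hq
  intro h hh h1 h2
  have key : g⁻¹ * h * g = 1 := by
    refine hp _ (L.mul_mem (L.mul_mem (L.inv_mem hg) hh) hg) ?_ ?_
    · show g⁻¹ (h (g p.1)) = p.1
      rw [show h (g p.1) = g p.1 from h1]; simp
    · show g⁻¹ (h (g p.2)) = p.2
      rw [show h (g p.2) = g p.2 from h2]; simp
  have : g * (g⁻¹ * h * g) * g⁻¹ = g * 1 * g⁻¹ := by rw [key]
  calc h = g * (g⁻¹ * h * g) * g⁻¹ := by group
  _ = g * 1 * g⁻¹ := this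
  _ = 1 := by group

lemma orb_rep_first (htrans : ∀ a b : Γ, ∃ g ∈ L, g a = b) {O : Set (Γ × Γ)}
    (hO : O ∈ OrbSet L) (β : Γ) :
    ∃ δ, IsRegPair (L : Set (Perm Γ)) (β, δ) ∧ orb L (β, δ) = O := by
  obtain ⟨p, hreg, rfl⟩ := hO
  obtain ⟨g, hg, hgβ⟩ := htrans p.1 β
  have hmem : (β, g p.2) ∈ orb L p := ⟨g, hg, by rw [← hgβ]⟩
  exact ⟨g p.2, isRegPair_of_mem_orb hreg hmem, orb_eq_of_mem hmem⟩

end Orbits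

end Stmt17Aux

open Stmt17Aux Equiv

/-- **Proposition 5.11.** Let `L ≤ Sym(Γ)` be a finite base-two primitive group with
`r(L) ≥ 2` regular suborbits. If the Saxl graph of every finite base-two primitive group
has diameter at most 2, then for all `α, β ∈ Γ`, the Saxl neighbourhood `Σ_L(α)` meets
every regular `L_β`-orbit on `Γ`. -/
theorem stmt17 {Γ : Type} [Fintype Γ] [Nonempty Γ] (L : Subgroup (Equiv.Perm Γ))
    (hLprim : IsPrimitiveSub L)
    (hr : 2 ≤ regCount (L : Set (Equiv.Perm Γ)))
    (hb2 : ∃ p : Γ × Γ, IsRegPair (L : Set (Equiv.Perm Γ)) p)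
    (hdiam : ∀ (Ω : Type) (_ : Fintype Ω) (G : Subgroup (Equiv.Perm Ω)),
      IsPrimitiveSub G → (∃ p : Ω × Ω, IsRegPair (G : Set (Equiv.Perm Ω)) p) →
      ∀ a b : Ω, a ≠ b →
        (IsRegPair (G : Set (Equiv.Perm Ω)) (a, b) ∨
          ∃ c : Ω, IsRegPair (G : Set (Equiv.Perm Ω)) (a, c) ∧
            IsRegPair (G : Set (Equiv.Perm Ω)) (b, c))) :
    ∀ α β γ0 : Γ, (∀ g ∈ L, g β = β → g γ0 = γ0 → g = 1) →
      ∃ γ : Γ, (∃ g ∈ L, g β = β ∧ g γ0 = γ) ∧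
        (∀ g ∈ L, g α = α → g γ = γ → g = 1) := by
  classical
  intro α β γ0 hreg0
  -- trivial case : the stabiliser of α is trivial
  by_cases hLα : ∀ g ∈ L, g α = α → g = 1
  · exact ⟨γ0, ⟨1, L.one_mem, rfl, rfl⟩, fun g hg h1 _ => hLα g hg h1⟩
  push_neg at hLα
  obtain ⟨h0, h0L, h0fix, h0ne⟩ := hLα
  have hnr : ∃ h : Perm Γ, h ∈ L ∧ h ≠ 1 ∧ ∃ c, h c = c := ⟨h0, h0L, h0ne, α, h0fix⟩
  obtain ⟨x0, y0, hx0y0⟩ : ∃ x y : Γ, x ≠ y := by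
    by_contra hcon; push_neg at hcon
    exact h0ne (Equiv.ext fun z => hcon (h0 z) ((1 : Equiv.Perm Γ) z))
  by_cases hab : α = β
  · subst hab
    exact ⟨γ0, ⟨1, L.one_mem, rfl, rfl⟩, hreg0⟩
  set r := regCount (L : Set (Equiv.Perm Γ)) with hrdef
  have hr2 : 2 ≤ r := hr
  have h0r : (0 : ℕ) < r := by omega
  have h1r : (1 : ℕ) < r := by omega
  set i0 : Fin r := ⟨0, h0r⟩
  set i1 : Fin r := ⟨1, h1r⟩
  have hi01 : i0 ≠ i1 := by simp [i0, i1, Fin.ext_iff]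
  set G := Gr r L with hGdef
  have hGprim : IsPrimitiveSub G := primG hLprim hnr
  -- representatives of the regular orbits
  have hfin : (OrbSet L).Finite := Set.toFinite _
  have hcard : hfin.toFinset.card = r := by
    rw [← Set.ncard_eq_toFinset_card _ hfin, hrdef, regCount_eq]
  set e : Fin r ≃ hfin.toFinset := (hfin.toFinset.equivFinOfCardEq hcard).symm with he
  have hmem : ∀ i : Fin r, ((e i : Set (Γ × Γ))) ∈ OrbSet L := by
    intro i
    have := (e i).2
    rwa [Set.Finite.mem_toFinset] at this
  choose δ hδreg hδorb using fun i : Fin r =>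
    orb_rep_first hLprim.1 (hmem i) β
  -- base pair for G
  have bp : IsRegPair (G : Set (Perm (Fin r → Γ))) ((fun _ => β), δ) := by
    intro g hg hfix1 hfix2
    rw [SetLike.mem_coe, hGdef, Gr_mem_iff] at hg
    obtain ⟨σ, z, hz, rfl⟩ := hg
    have hzβ : ∀ i, z i β = β := by
      intro i
      have := congrFun hfix1 (σ i)
      rwa [pc_eval, Equiv.symm_apply_apply] at this
    have hzδ : ∀ i, z i (δ i) = δ (σ i) := by
      intro i
      have := congrFun hfix2 (σ i)
      rwa [pc_eval, Equiv.symm_apply_apply] at this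
    have hσ : ∀ i, σ i = i := by
      intro i
      have hmemo : ((β : Γ), δ (σ i)) ∈ orb L (β, δ i) :=
        ⟨z i, hz i, by
          show ((β : Γ), δ (σ i)) = (z i β, z i (δ i))
          rw [hzβ i, hzδ i]⟩
      have horb : orb L (β, δ (σ i)) = orb L (β, δ i) := orb_eq_of_mem hmemo
      have : e (σ i) = e i := by
        apply Subtype.ext
        rw [← hδorb (σ i), ← hδorb i, horb]
      exact e.injective this
    have hσ1 : σ = 1 := Equiv.ext hσ
    have hz1 : ∀ i, z i = 1 := by
      intro i
      refine hδreg i (z i) (hz i) (hzβ i) ?_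
      have := hzδ i; rwa [hσ i] at this
    have : z = fun _ => 1 := funext hz1
    rw [hσ1, this, pc_one]
  have hbase : ∃ p : (Fin r → Γ) × (Fin r → Γ),
      IsRegPair (G : Set (Perm (Fin r → Γ))) p := ⟨_, bp⟩
  have hne : (fun _ : Fin r => α) ≠ (fun _ => β) := by
    intro hcon; exact hab (congrFun hcon i0)
  rcases hdiam (Fin r → Γ) inferInstance G hGprim hbase _ _ hne with hreg | ⟨c, hca, hcb⟩
  · -- (constα, constβ) cannot be a base : use the swap
    exfalso
    have hswap : pc (Equiv.swap i0 i1) (fun _ => 1) ∈ G :=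
      mem_Gr _ _ (fun _ => L.one_mem)
    have h1 : pc (Equiv.swap i0 i1) (fun _ : Fin r => (1 : Perm Γ)) = 1 := by
      refine hreg _ hswap ?_ ?_
      · funext j; rw [pc_swap_apply]
      · funext j; rw [pc_swap_apply]
    set f : Fin r → Γ := Function.update (fun _ => x0) i0 y0 with hf
    have h2 : pc (Equiv.swap i0 i1) (fun _ : Fin r => (1 : Perm Γ)) f i1 = f i1 := by
      rw [h1]; rfl
    rw [pc_swap_apply, Equiv.swap_apply_right, hf, Function.update_self,
      Function.update_of_ne (Ne.symm hi01)] at h2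
    exact hx0y0 h2.symm
  · -- common neighbour case
    have coordreg : ∀ (a : Γ) (cc : Fin r → Γ),
        IsRegPair (G : Set (Perm (Fin r → Γ))) ((fun _ => a), cc) →
        ∀ i, IsRegPair (L : Set (Perm Γ)) (a, cc i) := by
      intro a cc hcc i h hhL hfa hfc
      have hmemG : pc 1 (bz i h) ∈ G := mem_Gr _ _ (bz_mem i hhL)
      have h1 : pc 1 (bz i h) = 1 := by
        refine hcc _ hmemG ?_ ?_
        · show pc 1 (bz i h) (fun _ => a) = fun _ => a
          rw [pc_single_apply]
          have : h a = a := hfa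
          rw [this, Function.update_eq_self]
        · show pc 1 (bz i h) cc = cc
          rw [pc_single_apply]
          have : h (cc i) = cc i := hfc
          rw [this, Function.update_eq_self]
      apply Equiv.ext; intro x
      have h2 : pc 1 (bz i h) (fun _ : Fin r => x) = (fun _ : Fin r => x) := by
        rw [h1]; rfl
      have h3 := congrFun h2 i
      rw [pc_single_apply, Function.update_self] at h3
      simpa using h3
    have areg : ∀ i, IsRegPair (L : Set (Perm Γ)) (α, c i) := coordreg α c hca
    have breg : ∀ i, IsRegPair (L : Set (Perm Γ)) (β, c i) := coordreg β c hcb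
    -- the coordinates of c lie in distinct regular orbits
    have distinct : ∀ i j : Fin r, i ≠ j → orb L (β, c i) ≠ orb L (β, c j) := by
      intro i j hij heq
      have hmemo : ((β : Γ), c j) ∈ orb L (β, c i) := by
        rw [heq]; exact mem_orb_self _
      obtain ⟨h, hhL, hpair⟩ := hmemo
      have hhβ : h β = β := (congrArg Prod.fst hpair).symm
      have hhc : h (c i) = c j := (congrArg Prod.snd hpair).symm
      set z : Fin r → Perm Γ := fun m => if m = i then h else if m = j then h⁻¹ else 1 with hzdef
      have hinvβ : h⁻¹ β = β := by
        have h4 : h⁻¹ (h β) = β := by simp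
        rwa [hhβ] at h4
      have hzL : ∀ m, z m ∈ L := by
        intro m
        simp only [hzdef]
        by_cases h1 : m = i
        · rw [if_pos h1]; exact hhL
        by_cases h2 : m = j
        · rw [if_neg h1, if_pos h2]; exact L.inv_mem hhL
        · rw [if_neg h1, if_neg h2]; exact L.one_mem
      have hzβ : ∀ m, z m β = β := by
        intro m
        simp only [hzdef]
        by_cases h1 : m = i
        · rw [if_pos h1]; exact hhβ
        by_cases h2 : m = j
        · rw [if_neg h1, if_pos h2]; exact hinvβ
        · rw [if_neg h1, if_neg h2]; rfl
      have hg : pc (Equiv.swap i j) z ∈ G := mem_Gr _ _ hzL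
      have h1 : pc (Equiv.swap i j) z = 1 := by
        refine hcb _ hg ?_ ?_
        · funext m
          show pc (Equiv.swap i j) z (fun _ => β) m = β
          rw [pc_eval]
          exact hzβ _
        · funext m
          show pc (Equiv.swap i j) z c m = c m
          rw [pc_eval, Equiv.symm_swap]
          have hzi : z i = h := by simp [hzdef]
          have hzj : z j = h⁻¹ := by simp [hzdef, Ne.symm hij]
          by_cases hmi : m = i
          · rw [hmi, Equiv.swap_apply_left, hzj, ← hhc]
            simp
          by_cases hmj : m = j
          · rw [hmj, Equiv.swap_apply_right, hzi, hhc]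
          · rw [Equiv.swap_apply_of_ne_of_ne hmi hmj]
            have hzm : z m = 1 := by simp [hzdef, hmi, hmj]
            rw [hzm]; rfl
      -- contradiction : evaluate
      obtain ⟨v, hv⟩ : ∃ v : Γ, v ≠ h⁻¹ x0 := by
        rcases eq_or_ne x0 (h⁻¹ x0) with he | he
        · exact ⟨y0, by rw [← he]; exact Ne.symm hx0y0⟩
        · exact ⟨x0, he⟩
      set f : Fin r → Γ := Function.update (fun _ => x0) i v with hf
      have h2 : pc (Equiv.swap i j) z f i = f i := by rw [h1]; rfl
      rw [pc_eval, Equiv.symm_swap, Equiv.swap_apply_left, hf,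
        Function.update_of_ne (Ne.symm hij), Function.update_self] at h2
      have h3 : z j x0 = h⁻¹ x0 := by
        have hzj : z j = h⁻¹ := by simp [hzdef, Ne.symm hij]
        rw [hzj]
      rw [h3] at h2
      exact hv h2.symm
    -- the map to orbits is bijective
    set Φ : Fin r → hfin.toFinset := fun i =>
      ⟨orb L (β, c i), by rw [Set.Finite.mem_toFinset]; exact ⟨(β, c i), breg i, rfl⟩⟩ with hΦ
    have hΦinj : Function.Injective Φ := by
      intro i j hij
      by_contra hne2
      exact distinct i j hne2 (congrArg Subtype.val hij)
    have hΦbij : Function.Bijective Φ := by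
      rw [Fintype.bijective_iff_injective_and_card]
      refine ⟨hΦinj, ?_⟩
      rw [Fintype.card_fin, Fintype.card_coe, hcard]
    have hγ0mem : orb L (β, γ0) ∈ hfin.toFinset := by
      rw [Set.Finite.mem_toFinset]
      exact ⟨(β, γ0), fun g hg => hreg0 g hg, rfl⟩
    obtain ⟨i, hi⟩ := hΦbij.2 ⟨orb L (β, γ0), hγ0mem⟩
    have horb : orb L (β, c i) = orb L (β, γ0) := congrArg Subtype.val hi
    have hmemo : ((β : Γ), c i) ∈ orb L (β, γ0) := by
      rw [← horb]; exact mem_orb_self _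
    obtain ⟨g, hgL, hpair⟩ := hmemo
    have hgβ : g β = β := (Prod.mk.injEq _ _ _ _ |>.mp hpair).1.symm
    have hgγ : g γ0 = c i := (Prod.mk.injEq _ _ _ _ |>.mp hpair).2.symm
    exact ⟨c i, ⟨g, hgL, hgβ, hgγ⟩, fun h hh h1 h2 => areg i h hh h1 h2⟩
end
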